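/- arXiv:1103.5728 — 2 statements merged into one kernel-verified Lean document; each statement's English description precedes it below -/
import Mathlib

section
/- Let n ≥ 2 be an integer and let a = (a_1, …, a_{n−1}) ∈ ℚ^{n−1}. Then for every c ∈ ℚ, the set {b ∈ ℚ : Δ_{a,b} = c} has at most n−1 elements; in other words, the map b ↦ Δ_{a,b} is at most (n−1)-to-one. -/
open Polynomial

/-- `Q_a(x) = n (x - a₁/n)(x - a₂) ⋯ (x - a_{n-1})`, where the tuple
`(a₁, …, a_{n-1})` is given by the values `a 1, …, a (n-1)` of `a : ℕ → F`. -/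
noncomputable def Qa (F : Type) [Field F] (n : ℕ) (a : ℕ → F) : Polynomial F :=
  C (n : F) * (X - C (a 1 / (n : F))) * ∏ i ∈ Finset.Icc 2 (n - 1), (X - C (a i))

/-- `P_{a,b}`: the unique polynomial with derivative `Q_a` and constant coefficient `b`
(in characteristic zero). -/
noncomputable def Pab (F : Type) [Field F] (n : ℕ) (a : ℕ → F) (b : F) : Polynomial F :=
  C b + ∑ i ∈ Finset.range ((Qa F n a).natDegree + 1),
    C ((Qa F n a).coeff i / ((i : F) + 1)) * X ^ (i + 1)

/-- `Δ_{a,b} = c`: for some enumeration `r` of the complex roots of `P_{a,b}`,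
`∏_{i<j} (rᵢ - rⱼ)² = c`. -/
def HasDisc (n : ℕ) (a : ℕ → ℚ) (b c : ℚ) : Prop :=
  ∃ r : Fin n → ℂ, (Pab ℚ n a b).map (algebraMap ℚ ℂ) = ∏ i, (X - C (r i)) ∧
    (∏ i : Fin n, ∏ j ∈ Finset.Ioi i, (r i - r j) ^ 2) = (c : ℂ)

lemma derivative_finset_prod' {R ι : Type*} [CommRing R] [DecidableEq ι]
    (s : Finset ι) (f : ι → R[X]) :
    derivative (∏ i ∈ s, f i) =
      ∑ i ∈ s, (∏ j ∈ s.erase i, f j) * derivative (f i) := by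
  rw [Finset.prod_eq_multiset_prod, derivative_prod, Finset.sum_eq_multiset_sum]
  congr 1

lemma eval_deriv_prod {n : ℕ} (r : Fin n → ℂ) (k : Fin n) :
    eval (r k) (derivative (∏ i, (X - C (r i)))) =
      ∏ j ∈ Finset.univ.erase k, (r k - r j) := by
  rw [derivative_finset_prod', eval_finset_sum, Finset.sum_eq_single k]
  · simp [eval_prod]
  · intro i _ hik
    rw [eval_mul, eval_prod]
    apply mul_eq_zero_of_left
    exact Finset.prod_eq_zero (Finset.mem_erase.mpr ⟨Ne.symm hik, Finset.mem_univ k⟩) (by simp)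
  · simp

lemma prod_erase_eq {n : ℕ} (r : Fin n → ℂ) :
    ∏ k, ∏ j ∈ Finset.univ.erase k, (r k - r j) =
      (-1) ^ (∑ i : Fin n, (Finset.Ioi i).card) *
        ∏ i, ∏ j ∈ Finset.Ioi i, (r i - r j) ^ 2 := by
  have herase : ∀ k : Fin n, Finset.univ.erase k = Finset.Ioi k ∪ Finset.Iio k := by
    intro k; ext j
    simp only [Finset.mem_erase, Finset.mem_univ, and_true, Finset.mem_union,
      Finset.mem_Ioi, Finset.mem_Iio]
    exact ⟨fun h => (h.lt_or_gt).symm, fun h => h.elim (fun h => ne_of_gt h) fun h => ne_of_lt h⟩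
  have hdisj : ∀ k : Fin n, Disjoint (Finset.Ioi k) (Finset.Iio k) := by
    intro k
    simp [Finset.disjoint_left]
    intro j hj; exact le_of_lt hj
  calc ∏ k, ∏ j ∈ Finset.univ.erase k, (r k - r j)
      = ∏ k, ((∏ j ∈ Finset.Ioi k, (r k - r j)) * ∏ j ∈ Finset.Iio k, (r k - r j)) := by
        refine Finset.prod_congr rfl fun k _ => ?_
        rw [herase k, Finset.prod_union (hdisj k)]
    _ = (∏ k, ∏ j ∈ Finset.Ioi k, (r k - r j)) * ∏ k, ∏ j ∈ Finset.Iio k, (r k - r j) := by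
        rw [Finset.prod_mul_distrib]
    _ = (∏ k, ∏ j ∈ Finset.Ioi k, (r k - r j)) * ∏ k, ∏ j ∈ Finset.Ioi k, (r j - r k) := by
        congr 1
        exact Finset.prod_comm' (fun x y => by simp)
    _ = ∏ k, ∏ j ∈ Finset.Ioi k, ((r k - r j) * (r j - r k)) := by
        rw [← Finset.prod_mul_distrib]
        exact Finset.prod_congr rfl fun k _ => (Finset.prod_mul_distrib).symm
    _ = ∏ k, ∏ j ∈ Finset.Ioi k, ((-1) * (r k - r j) ^ 2) := by
        refine Finset.prod_congr rfl fun k _ => Finset.prod_congr rfl fun j _ => ?_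
        ring
    _ = ∏ k, ((-1) ^ (Finset.Ioi k).card * ∏ j ∈ Finset.Ioi k, (r k - r j) ^ 2) := by
        refine Finset.prod_congr rfl fun k _ => ?_
        rw [Finset.prod_mul_distrib, Finset.prod_const]
    _ = (-1) ^ (∑ i : Fin n, (Finset.Ioi i).card) *
        ∏ i, ∏ j ∈ Finset.Ioi i, (r i - r j) ^ 2 := by
        rw [Finset.prod_mul_distrib, Finset.prod_pow_eq_pow_sum]

lemma derivative_Pab (F : Type) [Field F] [CharZero F] (n : ℕ) (a : ℕ → F) (b : F) :
    derivative (Pab F n a b) = Qa F n a := by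
  unfold Pab
  rw [derivative_add, derivative_C, zero_add, derivative_sum]
  have h : ∀ i ∈ Finset.range ((Qa F n a).natDegree + 1),
      derivative (C ((Qa F n a).coeff i / ((i : F) + 1)) * X ^ (i + 1)) =
        C ((Qa F n a).coeff i) * X ^ i := by
    intro i _
    rw [derivative_C_mul, derivative_X_pow, Nat.add_sub_cancel, ← mul_assoc, ← C_mul]
    push_cast
    rw [div_mul_cancel₀]
    exact Nat.cast_add_one_ne_zero i
  rw [Finset.sum_congr rfl h]
  exact ((Qa F n a).as_sum_range_C_mul_X_pow).symm

theorem disc_at_most_n_sub_one_to_one (n : ℕ) (hn : 2 ≤ n) (a : ℕ → ℚ) (c : ℚ) :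
    {b : ℚ | HasDisc n a b c}.Finite ∧ {b : ℚ | HasDisc n a b c}.ncard ≤ n - 1 := by
  classical
  set φ := algebraMap ℚ ℂ with hφ
  set S : ℚ[X] := Pab ℚ n a 0 with hS
  set K : ℕ := (Finset.Icc 2 (n-1)).card with hK
  set s : ℕ := ∑ i : Fin n, (Finset.Ioi i).card with hs
  set M : ℕ := s + n + n * K with hM
  set ε : ℚ := (-1) ^ M * (n : ℚ) ^ n with hε
  set G : ℚ[X] := C ε * ((X + C (S.eval (a 1 / n))) *
      ∏ i ∈ Finset.Icc 2 (n-1), (X + C (S.eval (a i)))) - C c with hG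
  have hn0 : (n : ℚ) ≠ 0 := Nat.cast_ne_zero.mpr (by omega)
  have hεne : ε ≠ 0 := by
    apply mul_ne_zero
    · exact pow_ne_zero _ (by norm_num)
    · exact pow_ne_zero _ hn0
  -- every b with HasDisc is a root of G
  have hsub : {b : ℚ | HasDisc n a b c} ⊆ {x | G.IsRoot x} := by
    intro b hb
    obtain ⟨r, hr, hΔ⟩ := hb
    set P : ℚ[X] := Pab ℚ n a b with hP
    have hPy : ∀ y : ℚ, P.eval y = b + S.eval y := by
      intro y
      simp [hP, hS, Pab]
    have hderiv : derivative (∏ i, (X - C (r i))) = (Qa ℚ n a).map φ := by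
      rw [← hr, derivative_map, derivative_Pab]
    have h2 : ∀ k, eval (r k) ((Qa ℚ n a).map φ) =
        (n : ℂ) * (r k - ((a 1 / (n:ℚ) : ℚ) : ℂ)) *
          ∏ i ∈ Finset.Icc 2 (n-1), (r k - ((a i : ℚ) : ℂ)) := by
      intro k
      simp [Qa, eval_map, eval₂_finset_prod, hφ]
    rw [← hφ] at hr
    have h3 : ∀ y : ℚ, ∏ k, (r k - (y:ℂ)) = (-1:ℂ)^n * ((P.eval y : ℚ) : ℂ) := by
      intro y
      have hy : (y : ℂ) = φ y := (eq_ratCast φ y).symm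
      have he : ∏ k, ((y:ℂ) - r k) = ((P.eval y : ℚ) : ℂ) := by
        have h5 : eval (φ y) (P.map φ) = φ (P.eval y) := by
          rw [eval_map, eval₂_at_apply]
        rw [hr, eval_prod] at h5
        simp only [eval_sub, eval_X, eval_C] at h5
        rw [hy, h5, eq_ratCast]
      calc ∏ k, (r k - (y:ℂ)) = ∏ k, (-1) * ((y:ℂ) - r k) := by
            refine Finset.prod_congr rfl fun k _ => ?_; ring
        _ = (-1:ℂ)^n * ∏ k, ((y:ℂ) - r k) := by
            rw [Finset.prod_mul_distrib, Finset.prod_const, Finset.card_univ, Fintype.card_fin]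
        _ = (-1:ℂ)^n * ((P.eval y : ℚ) : ℂ) := by rw [he]
    have h1 : ((-1:ℂ))^s * (c:ℂ) = ∏ k, eval (r k) ((Qa ℚ n a).map φ) := by
      rw [← hΔ, hs, ← prod_erase_eq]
      refine (Finset.prod_congr rfl fun k _ => ?_).symm
      rw [← hderiv, eval_deriv_prod]
    have h4 : ((-1:ℂ))^s * (c:ℂ) =
        (n:ℂ)^n * ((-1:ℂ)^n * ((P.eval (a 1 / n) : ℚ) : ℂ)) *
          ∏ i ∈ Finset.Icc 2 (n-1), ((-1:ℂ)^n * ((P.eval (a i) : ℚ) : ℂ)) := by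
      rw [h1, Finset.prod_congr rfl fun k _ => h2 k]
      rw [Finset.prod_mul_distrib, Finset.prod_mul_distrib, Finset.prod_const,
        Finset.card_univ, Fintype.card_fin, Finset.prod_comm]
      rw [h3 (a 1 / n)]
      congr 1
      exact Finset.prod_congr rfl fun i _ => h3 (a i)
    have hc : (c : ℂ) = ((ε * (P.eval (a 1 / n) * ∏ i ∈ Finset.Icc 2 (n-1), P.eval (a i)) : ℚ) : ℂ) := by
      have hsq : ((-1:ℂ))^s * ((-1:ℂ))^s = 1 := by
        rw [← pow_add]
        exact (neg_one_pow_eq_one_iff_even (by norm_num)).mpr ⟨s, by ring⟩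
      calc (c : ℂ) = ((-1:ℂ))^s * ((-1:ℂ))^s * (c:ℂ) := by rw [hsq, one_mul]
        _ = ((-1:ℂ))^s * ((n:ℂ)^n * ((-1:ℂ)^n * ((P.eval (a 1 / n) : ℚ) : ℂ)) *
            ∏ i ∈ Finset.Icc 2 (n-1), ((-1:ℂ)^n * ((P.eval (a i) : ℚ) : ℂ))) := by
            rw [mul_assoc, h4]
        _ = _ := by
            rw [Finset.prod_mul_distrib, Finset.prod_const, ← hK]
            push_cast [hε, hM]
            ring
    have hcq : c = ε * (P.eval (a 1 / n) * ∏ i ∈ Finset.Icc 2 (n-1), P.eval (a i)) :=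
      Rat.cast_injective hc
    show G.IsRoot b
    simp only [hG, IsRoot, eval_sub, eval_mul, eval_C, eval_add, eval_X, eval_prod,
      sub_eq_zero]
    rw [hcq]
    congr 1
    rw [hPy]
    congr 1
    exact Finset.prod_congr rfl fun i _ => (hPy (a i)).symm
  -- G is nonzero of degree ≤ n - 1
  have hmonicprod : (∏ i ∈ Finset.Icc 2 (n-1), (X + C (S.eval (a i)))).Monic :=
    monic_prod_of_monic _ _ fun i _ => monic_X_add_C _
  have hHmonic : ((X + C (S.eval (a 1 / n))) *
      ∏ i ∈ Finset.Icc 2 (n-1), (X + C (S.eval (a i)))).Monic :=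
    (monic_X_add_C _).mul hmonicprod
  have hHdeg : ((X + C (S.eval (a 1 / n))) *
      ∏ i ∈ Finset.Icc 2 (n-1), (X + C (S.eval (a i)))).natDegree = n - 1 := by
    rw [(monic_X_add_C _).natDegree_mul hmonicprod, natDegree_X_add_C,
      natDegree_prod_of_monic _ _ fun i _ => monic_X_add_C _]
    simp only [natDegree_X_add_C, Finset.sum_const, smul_eq_mul, mul_one, ← hK]
    rw [hK, Nat.card_Icc]
    omega
  have hGne : G ≠ 0 := by
    intro h
    have h2 : C ε * ((X + C (S.eval (a 1 / n))) *
        ∏ i ∈ Finset.Icc 2 (n-1), (X + C (S.eval (a i)))) = C c := by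
      rw [hG, sub_eq_zero] at h; exact h
    have h3 := congrArg natDegree h2
    rw [natDegree_C_mul hεne, hHdeg, natDegree_C] at h3
    omega
  have hGdeg : G.natDegree ≤ n - 1 := by
    rw [hG]
    refine le_trans (natDegree_sub_le _ _) ?_
    simp [natDegree_C_mul hεne, hHdeg]
  refine ⟨(G.finite_setOf_isRoot hGne).subset hsub, ?_⟩
  have hroots : {x | G.IsRoot x} = ↑G.roots.toFinset := by
    ext x
    simp [Polynomial.mem_roots, hGne]
  calc {b : ℚ | HasDisc n a b c}.ncard ≤ {x | G.IsRoot x}.ncard :=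
        Set.ncard_le_ncard hsub (G.finite_setOf_isRoot hGne)
    _ = G.roots.toFinset.card := by rw [hroots, Set.ncard_coe_finset]
    _ ≤ Multiset.card G.roots := Multiset.toFinset_card_le _
    _ ≤ G.natDegree := G.card_roots' 
    _ ≤ n - 1 := hGdeg
end

section
/- Let n ≥ 2 be an integer and let a = (a_1, …, a_{n−1}) ∈ ℝ^{n−1}. Then there exists B ≥ 0 such that for every real number b with |b| > B, the polynomial P_{a,b} has at most 2 real roots. -/
open Polynomial

lemma Qa_ne_zero (n : ℕ) (hn : 2 ≤ n) (a : ℕ → ℝ) : Qa ℝ n a ≠ 0 := by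
  unfold Qa
  refine mul_ne_zero (mul_ne_zero ?_ (X_sub_C_ne_zero _)) ?_
  · simp only [ne_eq, C_eq_zero, Nat.cast_eq_zero]
    omega
  · exact Finset.prod_ne_zero_iff.mpr fun i _ => X_sub_C_ne_zero _

lemma deriv_Pab (n : ℕ) (a : ℕ → ℝ) (b : ℝ) :
    (Pab ℝ n a b).derivative = Qa ℝ n a := by
  unfold Pab
  rw [derivative_add, derivative_C, zero_add, derivative_sum]
  have h : ∀ i : ℕ,
      (C ((Qa ℝ n a).coeff i / ((i : ℝ) + 1)) * X ^ (i + 1)).derivative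
        = C ((Qa ℝ n a).coeff i) * X ^ i := by
    intro i
    rw [derivative_C_mul, derivative_X_pow, Nat.add_sub_cancel, ← mul_assoc, ← C_mul]
    congr 1
    push_cast
    field_simp
  rw [Finset.sum_congr rfl fun i _ => h i]
  conv_rhs => rw [(Qa ℝ n a).as_sum_range' ((Qa ℝ n a).natDegree + 1) (lt_add_one _)]
  exact Finset.sum_congr rfl fun i _ => C_mul_X_pow_eq_monomial

lemma eval_Pab (n : ℕ) (a : ℕ → ℝ) (b x : ℝ) :
    (Pab ℝ n a b).eval x = b + (Pab ℝ n a 0).eval x := by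
  unfold Pab
  simp

/-- If all critical values of `p` are positive, `p` cannot have three roots. -/
lemma no_three_roots (p : ℝ[X]) (hcrit : ∀ c : ℝ, p.derivative.eval c = 0 → 0 < p.eval c)
    (x1 x2 x3 : ℝ) (h12 : x1 < x2) (h23 : x2 < x3)
    (h1 : p.eval x1 = 0) (h2 : p.eval x2 = 0) (h3 : p.eval x3 = 0) : False := by
  have key : ∀ u v : ℝ, u < v → p.eval u = 0 → p.eval v = 0 →
      ∀ x ∈ Set.Ioo u v, 0 < p.eval x := by
    intro u v huv hu hv
    have hcont : ContinuousOn (fun x : ℝ => p.eval x) (Set.Icc u v) :=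
      (Polynomial.continuous p).continuousOn
    have hnomin : ∀ x ∈ Set.Ioo u v, ¬ IsMinOn (fun y : ℝ => p.eval y) (Set.Icc u v) x := by
      intro x hx hmin
      have hloc : IsLocalMin (fun y : ℝ => p.eval y) x :=
        hmin.isLocalMin (Icc_mem_nhds hx.1 hx.2)
      have hd : deriv (fun y : ℝ => p.eval y) x = 0 := hloc.deriv_eq_zero
      rw [Polynomial.deriv] at hd
      have hpos := hcrit x hd
      have hle : p.eval x ≤ p.eval u := hmin (Set.left_mem_Icc.mpr huv.le)
      rw [hu] at hle
      linarith
    obtain ⟨c, hc, hmin⟩ := isCompact_Icc.exists_isMinOn (Set.nonempty_Icc.mpr huv.le) hcont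
    have hc0 : p.eval c = 0 := by
      by_cases hcu : c = u
      · rw [hcu]; exact hu
      by_cases hcv : c = v
      · rw [hcv]; exact hv
      · exact absurd hmin
          (hnomin c ⟨lt_of_le_of_ne hc.1 (Ne.symm hcu), lt_of_le_of_ne hc.2 hcv⟩)
    have hnonneg : ∀ y ∈ Set.Icc u v, 0 ≤ p.eval y := by
      intro y hy
      have h' : p.eval c ≤ p.eval y := hmin hy
      rw [hc0] at h'
      exact h'
    intro x hx
    rcases (hnonneg x (Set.mem_Icc_of_Ioo hx)).lt_or_eq with h | h
    · exact h
    · exfalso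
      apply hnomin x hx
      intro y hy
      simp only [Set.mem_setOf_eq]
      rw [← h]
      exact hnonneg y hy
  have hloc : IsLocalMin (fun y : ℝ => p.eval y) x2 := by
    filter_upwards [Ioo_mem_nhds h12 h23] with y hy
    rcases lt_trichotomy y x2 with h | h | h
    · have := key x1 x2 h12 h1 h2 y ⟨hy.1, h⟩
      simp only [h2]; linarith
    · simp [h]
    · have := key x2 x3 h23 h2 h3 y ⟨h, hy.2⟩
      simp only [h2]; linarith
  have hd : deriv (fun y : ℝ => p.eval y) x2 = 0 := hloc.deriv_eq_zero
  rw [Polynomial.deriv] at hd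
  have := hcrit x2 hd
  rw [h2] at this
  exact lt_irrefl 0 this

theorem at_most_two_real_roots_for_large_b (n : ℕ) (hn : 2 ≤ n) (a : ℕ → ℝ) :
    ∃ B : ℝ, 0 ≤ B ∧ ∀ b : ℝ, B < |b| →
      (Pab ℝ n a b).roots.toFinset.card ≤ 2 := by
  set Q := Qa ℝ n a with hQ
  set G := Pab ℝ n a 0 with hG
  refine ⟨∑ c ∈ Q.roots.toFinset, |G.eval c|, Finset.sum_nonneg fun c _ => abs_nonneg _, ?_⟩
  intro b hb
  set B := ∑ c ∈ Q.roots.toFinset, |G.eval c| with hB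
  -- bound on |G.eval c| for critical points
  have hGc : ∀ c : ℝ, Q.eval c = 0 → |G.eval c| ≤ B := by
    intro c hc
    have hQne : Q ≠ 0 := Qa_ne_zero n hn a
    have hcm : c ∈ Q.roots.toFinset := by
      rw [Multiset.mem_toFinset, mem_roots hQne]
      exact hc
    exact Finset.single_le_sum (fun i _ => abs_nonneg (G.eval i)) hcm
  by_contra hcard
  push_neg at hcard
  set P := Pab ℝ n a b with hP
  set s := P.roots.toFinset with hs
  have hPne : P ≠ 0 := by
    intro h
    have := deriv_Pab n a b
    rw [← hP, h, derivative_zero] at this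
    exact Qa_ne_zero n hn a this.symm
  have hroot : ∀ x ∈ s, P.eval x = 0 := by
    intro x hx
    rw [hs, Multiset.mem_toFinset, mem_roots hPne] at hx
    exact hx
  have h3 : 3 ≤ s.card := hcard
  -- pick three distinct ordered elements
  have hne : s.Nonempty := Finset.card_pos.mp (by omega)
  set m := s.min' hne with hm
  set M := s.max' hne with hM
  have hmM : m < M := s.min'_lt_max'_of_card (by omega)
  have hms : m ∈ s := s.min'_mem hne
  have hMs : M ∈ s := s.max'_mem hne
  have hMem : M ∈ s.erase m := Finset.mem_erase.mpr ⟨hmM.ne', hMs⟩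
  have hcard2 : 1 ≤ ((s.erase m).erase M).card := by
    rw [Finset.card_erase_of_mem hMem, Finset.card_erase_of_mem hms]
    omega
  obtain ⟨y, hy⟩ := Finset.card_pos.mp hcard2
  have hyM : y ≠ M := (Finset.mem_erase.mp hy).1
  have hym : y ≠ m := (Finset.mem_erase.mp (Finset.mem_erase.mp hy).2).1
  have hys : y ∈ s := Finset.mem_of_mem_erase (Finset.mem_of_mem_erase hy)
  have hmy : m < y := lt_of_le_of_ne (s.min'_le y hys) (Ne.symm hym)
  have hyM' : y < M := lt_of_le_of_ne (s.le_max' y hys) hyM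
  -- sign of critical values
  have hcritQ : ∀ c : ℝ, P.derivative.eval c = 0 → Q.eval c = 0 := by
    intro c hc
    rwa [hP, deriv_Pab] at hc
  have hevalP : ∀ x : ℝ, P.eval x = b + G.eval x := fun x => eval_Pab n a b x
  have hB0 : 0 ≤ B := Finset.sum_nonneg fun c _ => abs_nonneg _
  have hbne : b ≠ 0 := by
    intro h; rw [h, abs_zero] at hb; linarith
  rcases hbne.lt_or_gt with hbneg | hbpos
  · -- b < 0 : use -P
    have habs : -b = |b| := (abs_of_neg hbneg).symm
    refine no_three_roots (-P) ?_ m y M hmy hyM' ?_ ?_ ?_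
    · intro c hc
      rw [derivative_neg, eval_neg, neg_eq_zero] at hc
      have hQc := hcritQ c hc
      have hGb := hGc c hQc
      have : G.eval c ≤ |G.eval c| := le_abs_self _
      rw [eval_neg, hevalP c]
      have : G.eval c < -b := by
        have := hGc c hQc
        nlinarith [le_abs_self (G.eval c), hb]
      linarith
    · rw [eval_neg, hroot m hms, neg_zero]
    · rw [eval_neg, hroot y hys, neg_zero]
    · rw [eval_neg, hroot M hMs, neg_zero]
  · -- 0 < b
    have habs : b = |b| := (abs_of_pos hbpos).symm
    refine no_three_roots P ?_ m y M hmy hyM' (hroot m hms) (hroot y hys) (hroot M hMs)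
    intro c hc
    have hQc := hcritQ c hc
    have hGb := hGc c hQc
    rw [hevalP c]
    have : -(G.eval c) ≤ |G.eval c| := neg_le_abs _
    have : B < b := by rwa [← habs] at hb
    linarith
end
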